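/- Let G be a finite cyclic group of prime order q generated by g acting faithfully on L by ν-preserving automorphisms, where ν is a surjective discrete valuation on L with residue field l. If q ≠ char(l) and g acts trivially on both O_L/m_L and m_L/m_L², then G is trivial (contradiction with faithfulness); equivalently, no element of prime order q ≠ char(l) can act trivially on both O_L/m_L and m_L/m_L² while acting nontrivially on L. -/

import Mathlib

namespace Stmt6Aux

/-- Shorthand for the canonical elements of `WithZero (Multiplicative ℤ)`. -/
noncomputable def e (n : ℤ) : WithZero (Multiplicative ℤ) :=
  ((Multiplicative.ofAdd n : Multiplicative ℤ) : WithZero (Multiplicative ℤ))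

lemma e_mul (a b : ℤ) : e a * e b = e (a + b) := by
  simp [e, ← WithZero.coe_mul, ← ofAdd_add]

lemma e_zero : e 0 = 1 := rfl

lemma e_le (a b : ℤ) : e a ≤ e b ↔ a ≤ b := by
  simp [e, WithZero.coe_le_coe, Multiplicative.ofAdd_le]

lemma e_ne (a : ℤ) : e a ≠ 0 := WithZero.coe_ne_zero

lemma e_pow (a : ℤ) (n : ℕ) : (e a) ^ n = e (n * a) := by
  simp [e, ← WithZero.coe_pow, ← ofAdd_nsmul, nsmul_eq_mul]

lemma e_inv (a : ℤ) : (e a)⁻¹ = e (-a) := by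
  simp [e, ← WithZero.coe_inv, ← ofAdd_neg]

end Stmt6Aux

open Stmt6Aux in
/-- no automorphism `g ≠ 1` of `L` of prime order `q` different from the
residue characteristic, preserving a surjective discrete valuation, can induce the
identity on both `O_L/m_L` and `m_L/m_L²`. -/
theorem stmt6 (L : Type*) [Field L]
    (v : Valuation L (WithZero (Multiplicative ℤ)))
    (hv : Function.Surjective v)
    (q : ℕ) (hq : q.Prime)
    (hchar : q ≠ ringChar (IsLocalRing.ResidueField v.valuationSubring))
    (g : L ≃+* L)
    (hg : g ≠ RingEquiv.refl L)
    (hord : orderOf g = q)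
    (hpres : ∀ x : L, v (g x) = v x)
    (h1 : ∀ x : L, v x ≤ 1 →
      v (g x - x) ≤ ((Multiplicative.ofAdd (-1 : ℤ) : Multiplicative ℤ) :
        WithZero (Multiplicative ℤ)))
    (h2 : ∀ x : L, v x ≤ ((Multiplicative.ofAdd (-1 : ℤ) : Multiplicative ℤ) :
        WithZero (Multiplicative ℤ)) →
      v (g x - x) ≤ ((Multiplicative.ofAdd (-2 : ℤ) : Multiplicative ℤ) :
        WithZero (Multiplicative ℤ))) :
    False := by
  -- restate h1, h2 in terms of `e`
  replace h1 : ∀ x : L, v x ≤ 1 → v (g x - x) ≤ e (-1) := h1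
  replace h2 : ∀ x : L, v x ≤ e (-1) → v (g x - x) ≤ e (-2) := h2
  -- a uniformizer
  obtain ⟨π, hπ⟩ := hv (e (-1))
  have hπ0 : π ≠ 0 := by
    intro h; rw [h, map_zero] at hπ; exact (e_ne (-1)) hπ.symm
  -- `q` is a unit of the valuation ring, so `v q = 1`
  have hqv : v (q : L) = 1 := by
    set R := v.valuationSubring
    set l := IsLocalRing.ResidueField R
    have hql : ((q : ℕ) : l) ≠ 0 := by
      haveI : CharP l (ringChar l) := ringChar.charP l
      intro h0
      rw [CharP.cast_eq_zero_iff l (ringChar l) q] at h0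
      rcases (Nat.dvd_prime hq).mp h0 with h | h
      · exact CharP.ringChar_ne_one h
      · exact hchar h.symm
    have hres : IsLocalRing.residue R ((q : ℕ) : R) = ((q : ℕ) : l) := map_natCast _ q
    have hunit : IsUnit ((q : ℕ) : R) := by
      rw [← IsLocalRing.residue_ne_zero_iff_isUnit, hres]; exact hql
    obtain ⟨u, hu⟩ := hunit
    have hmul : ((u : R) : L) * (((u⁻¹ : Rˣ) : R) : L) = 1 := by
      exact_mod_cast congrArg (fun x : R => (x : L)) u.mul_inv
    have h1' : v ((u : R) : L) * v ((((u⁻¹ : Rˣ) : R) : L)) = 1 := by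
      rw [← map_mul, hmul, map_one]
    have hle1 : v ((u : R) : L) ≤ 1 := (u : R).2
    have hle2 : v ((((u⁻¹ : Rˣ) : R) : L)) ≤ 1 := ((u⁻¹ : Rˣ) : R).2
    have hvu : v ((u : R) : L) = 1 := by
      refine le_antisymm hle1 ?_
      calc (1 : WithZero (Multiplicative ℤ))
          = v ((u : R) : L) * v ((((u⁻¹ : Rˣ) : R) : L)) := h1'.symm
        _ ≤ v ((u : R) : L) * 1 := mul_le_mul_right hle2 _
        _ = v ((u : R) : L) := mul_one _
    have hcast : ((u : R) : L) = (q : L) := by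
      rw [hu]; exact_mod_cast rfl
    rwa [hcast] at hvu
  -- powers of g preserve v
  have hpresk : ∀ (k : ℕ) (y : L), v ((g ^ k) y) = v y := by
    intro k
    induction k with
    | zero => intro y; rfl
    | succ k ih =>
      intro y
      have : (g ^ (k + 1)) y = (g ^ k) (g y) := by rw [pow_succ]; rfl
      rw [this, ih, hpres]
  -- Claim C : for x in the valuation ring, v (g x - x) ≤ e(-1) * v x
  have hC : ∀ x : L, v x ≤ 1 → v (g x - x) ≤ e (-1) * v x := by
    intro x hx
    rcases eq_or_ne x 0 with rfl | hx0
    · simp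
    · have hvx0 : v x ≠ 0 := by simpa using hx0
      obtain ⟨γ, hγ⟩ := WithZero.ne_zero_iff_exists.mp hvx0
      have hγle : γ ≤ (1 : Multiplicative ℤ) := by
        rw [← WithZero.coe_le_one, hγ]; exact hx
      have hγadd : Multiplicative.toAdd γ ≤ 0 := hγle
      obtain ⟨n, hvx⟩ : ∃ n : ℕ, v x = e (-(n : ℤ)) := by
        refine ⟨(-Multiplicative.toAdd γ).toNat, ?_⟩
        rw [← hγ]
        congr 1
        have h' : (((-Multiplicative.toAdd γ).toNat : ℤ)) = -Multiplicative.toAdd γ :=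
          Int.toNat_of_nonneg (by omega)
        rw [h']
        simp
      rcases Nat.eq_zero_or_pos n with hn0 | hnpos
      · -- v x = 1
        have hvx1 : v x = 1 := by rw [hvx, hn0]; rfl
        calc v (g x - x) ≤ e (-1) := h1 x hx
          _ = e (-1) * v x := by rw [hvx1, mul_one]
      · obtain ⟨m, rfl⟩ : ∃ m, n = m + 1 := ⟨n - 1, by omega⟩
        -- decompose x = u * π ^ n
        set u : L := x * (π⁻¹) ^ (m + 1) with hu
        have hxu : x = u * π ^ (m + 1) := by
          rw [hu, mul_assoc, ← mul_pow, inv_mul_cancel₀ hπ0, one_pow, mul_one]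
        have hvu : v u = 1 := by
          have h' : v u = v x * ((v π)⁻¹) ^ (m + 1) := by
            rw [hu, map_mul, map_pow, map_inv₀]
          rw [h', hπ, hvx, e_inv, e_pow, e_mul]
          rw [← e_zero]
          congr 1
          push_cast
          ring
        have hgπ : v (g π) = e (-1) := by rw [hpres, hπ]
        have key1 : v (g u - u) ≤ e (-1) := h1 u (le_of_eq hvu)
        have key2 : v (g π - π) ≤ e (-2) := h2 π (le_of_eq hπ)
        have expand : g x - x
            = (g u - u) * (g π) ^ (m + 1) + u * ((g π) ^ (m + 1) - π ^ (m + 1)) := by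
          rw [hxu, map_mul, map_pow]; ring
        have bound1 : v ((g u - u) * (g π) ^ (m + 1)) ≤ e (-(m + 1 : ℤ) - 1) := by
          rw [map_mul, map_pow, hgπ, e_pow]
          calc v (g u - u) * e ((m + 1 : ℕ) * (-1)) ≤ e (-1) * e ((m + 1 : ℕ) * (-1)) :=
              mul_le_mul_left key1 _
            _ = e (-(m + 1 : ℤ) - 1) := by rw [e_mul]; congr 1; push_cast; ring
        have hgeom : (∑ i ∈ Finset.range (m + 1), (g π) ^ i * π ^ (m + 1 - 1 - i)) * (g π - π)
            = (g π) ^ (m + 1) - π ^ (m + 1) := geom_sum₂_mul _ _ _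
        have hsumv : v (∑ i ∈ Finset.range (m + 1), (g π) ^ i * π ^ (m + 1 - 1 - i))
            ≤ e (-(m : ℤ)) := by
          apply Valuation.map_sum_le
          intro i hi
          have hi' : i ≤ m := Nat.lt_succ_iff.mp (Finset.mem_range.mp hi)
          rw [map_mul, map_pow, map_pow, hgπ, hπ, e_pow, e_pow, e_mul, e_le]
          have h' : m + 1 - 1 - i = m - i := by omega
          rw [h']
          push_cast [Nat.cast_sub hi']
          ring_nf
          omega
        have bound2 : v (u * ((g π) ^ (m + 1) - π ^ (m + 1))) ≤ e (-(m + 1 : ℤ) - 1) := by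
          rw [map_mul, hvu, one_mul, ← hgeom, map_mul]
          calc v (∑ i ∈ Finset.range (m + 1), (g π) ^ i * π ^ (m + 1 - 1 - i)) * v (g π - π)
              ≤ e (-(m : ℤ)) * e (-2) := mul_le_mul' hsumv key2
            _ = e (-(m + 1 : ℤ) - 1) := by rw [e_mul]; congr 1; ring
        calc v (g x - x) ≤ max (v ((g u - u) * (g π) ^ (m + 1)))
              (v (u * ((g π) ^ (m + 1) - π ^ (m + 1)))) := expand ▸ v.map_add _ _
          _ ≤ e (-(m + 1 : ℤ) - 1) := max_le bound1 bound2
          _ = e (-1) * v x := by rw [hvx, e_mul]; congr 1; push_cast; ring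
  -- iterates of g
  have hgk : ∀ (x : L) (k : ℕ), (g ^ k) x = x + ∑ j ∈ Finset.range k, (g ^ j) (g x - x) := by
    intro x k
    induction k with
    | zero => rw [pow_zero, Finset.sum_range_zero, add_zero]; rfl
    | succ k ih =>
      calc (g ^ (k + 1)) x = (g ^ k) (g x) := by rw [pow_succ]; rfl
        _ = (g ^ k) x + (g ^ k) (g x - x) := by rw [← map_add]; congr 1; ring
        _ = x + ∑ j ∈ Finset.range k, (g ^ j) (g x - x) + (g ^ k) (g x - x) := by rw [ih]
        _ = x + ∑ j ∈ Finset.range (k + 1), (g ^ j) (g x - x) := by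
            rw [Finset.sum_range_succ]; ring
  -- Σ_{i<q} g^i c = 0
  have hS : ∀ x : L, ∑ i ∈ Finset.range q, (g ^ i) (g x - x) = 0 := by
    intro x
    have hgq : g ^ q = 1 := by rw [← hord]; exact pow_orderOf_eq_one g
    have := hgk x q
    rw [hgq] at this
    have h0 : x = x + ∑ i ∈ Finset.range q, (g ^ i) (g x - x) := this
    exact (left_eq_add.mp h0)
  -- telescoping: v (c - g^i c) ≤ e(-1) * v c for c in the valuation ring
  have htel : ∀ (c : L), v c ≤ 1 → ∀ i : ℕ, v (c - (g ^ i) c) ≤ e (-1) * v c := by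
    intro c hc i
    have hsum : (g ^ i) c - c = ∑ j ∈ Finset.range i, (g ^ j) (g c - c) := by
      have h' : ∀ j : ℕ, (g ^ (j + 1)) c - (g ^ j) c = (g ^ j) (g c - c) := by
        intro j
        have : (g ^ (j + 1)) c = (g ^ j) (g c) := by rw [pow_succ]; rfl
        rw [this, ← map_sub]
      calc (g ^ i) c - c = (g ^ i) c - (g ^ 0) c := by rw [pow_zero]; rfl
        _ = ∑ j ∈ Finset.range i, ((g ^ (j + 1)) c - (g ^ j) c) :=
            (Finset.sum_range_sub (fun j => (g ^ j) c) i).symm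
        _ = ∑ j ∈ Finset.range i, (g ^ j) (g c - c) := by
            exact Finset.sum_congr rfl fun j _ => h' j
    have : v (c - (g ^ i) c) = v ((g ^ i) c - c) := by
      rw [show c - (g ^ i) c = -((g ^ i) c - c) by ring, v.map_neg]
    rw [this, hsum]
    apply Valuation.map_sum_le
    intro j _
    rw [hpresk j]
    exact hC c hc
  -- main induction
  have hD : ∀ (n : ℕ) (x : L), v x ≤ 1 → v (g x - x) ≤ e (-(n : ℤ) - 1) * v x := by
    intro n
    induction n with
    | zero =>
      intro x hx
      have := hC x hx
      simpa using this
    | succ n ih =>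
      intro x hx
      set c : L := g x - x with hc
      have IH : v c ≤ e (-(n : ℤ) - 1) * v x := ih x hx
      have hc1 : v c ≤ 1 := by
        calc v c ≤ e (-(n : ℤ) - 1) * v x := IH
          _ ≤ 1 * 1 := mul_le_mul' (by rw [← e_zero, e_le]; omega) hx
          _ = 1 := one_mul 1
      have hqc : (q : L) * c = ∑ i ∈ Finset.range q, (c - (g ^ i) c) := by
        rw [Finset.sum_sub_distrib, hS x, sub_zero, Finset.sum_const, Finset.card_range,
          nsmul_eq_mul]
      have hvqc : v ((q : L) * c) = v c := by rw [map_mul, hqv, one_mul]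
      have hbound : v ((q : L) * c) ≤ e (-1) * v c := by
        rw [hqc]
        apply Valuation.map_sum_le
        intro i _
        exact htel c hc1 i
      calc v c = v ((q : L) * c) := hvqc.symm
        _ ≤ e (-1) * v c := hbound
        _ ≤ e (-1) * (e (-(n : ℤ) - 1) * v x) := mul_le_mul_right IH _
        _ = e (-((n : ℤ) + 1) - 1) * v x := by
            rw [← mul_assoc, e_mul]; congr 2; ring
        _ = e (-((n + 1 : ℕ) : ℤ) - 1) * v x := by push_cast; ring_nf
  -- g fixes the valuation ring
  have hfix : ∀ x : L, v x ≤ 1 → g x = x := by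
    intro x hx
    by_contra hne
    have hc0 : g x - x ≠ 0 := sub_ne_zero.mpr hne
    have hx0 : x ≠ 0 := by
      intro h
      apply hc0
      rw [h, map_zero, sub_zero]
    have hvc0 : v (g x - x) ≠ 0 := by simpa using hc0
    have hvx0 : v x ≠ 0 := by simpa using hx0
    obtain ⟨α, hα⟩ := WithZero.ne_zero_iff_exists.mp hvc0
    obtain ⟨β, hβ⟩ := WithZero.ne_zero_iff_exists.mp hvx0
    set N : ℕ := (Multiplicative.toAdd β - Multiplicative.toAdd α).toNat + 1 with hN
    have := hD N x hx
    rw [← hα, ← hβ] at this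
    have h' : (α : WithZero (Multiplicative ℤ))
        ≤ ((Multiplicative.ofAdd (-(N : ℤ) - 1) * β : Multiplicative ℤ) :
          WithZero (Multiplicative ℤ)) := by
      rw [WithZero.coe_mul]
      exact this
    rw [WithZero.coe_le_coe] at h'
    have h'' : Multiplicative.toAdd α ≤ -(N : ℤ) - 1 + Multiplicative.toAdd β := h'
    have hNge : (N : ℤ) ≥ Multiplicative.toAdd β - Multiplicative.toAdd α := by
      rw [hN]; push_cast; omega
    omega
  -- g fixes everything
  have hfixall : ∀ x : L, g x = x := by
    intro x
    rcases le_or_gt (v x) 1 with hx | hx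
    · exact hfix x hx
    · have hx0 : x ≠ 0 := by
        intro h; rw [h, map_zero] at hx; exact absurd hx (by simp)
      have hinv : v x⁻¹ ≤ 1 := by
        rw [map_inv₀]
        exact inv_le_one_of_one_le₀ (le_of_lt hx)
      have := hfix x⁻¹ hinv
      rw [map_inv₀] at this
      have := congrArg (·⁻¹) this
      simpa using this
  exact hg (RingEquiv.ext hfixall)
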